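/- Let 0 < r < 1 and let T be an invertible bounded operator in C_{1,r} on a complex Hilbert space H. For k ∈ ℕ and multi-indices n = (n₁,…,n_k), m = (m₁,…,m_k) with nonnegative integer entries, write p_{k,nm}(T) = T^{n₁}T*^{m₁}⋯T^{n_k}T*^{m_k}. Then the maximal closed subspace of H reducing T on which T restricts to an operator of class 𝒞_{1,r} equals the set { x ∈ H : (1+r²)‖p_{k,nm}(T)x‖² − ‖T p_{k,nm}(T)x‖² − r²‖T⁻* p_{k,nm}(T)x‖² = 0 for all k ∈ ℕ and all nonnegative integer multi-indices n, m of length k }. -/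

import Mathlib

open ContinuousLinearMap

variable {H : Type*} [NormedAddCommGroup H] [InnerProductSpace ℂ H] [CompleteSpace H]

/-- `T ∈ C_{1,r}`: `T` is invertible, `‖T‖ ≤ 1` and `‖r • T⁻¹‖ ≤ 1`. -/
def MemC1r (r : ℝ) (T : H →L[ℂ] H) : Prop :=
  IsUnit T ∧ ‖T‖ ≤ 1 ∧ ‖(r : ℂ) • Ring.inverse T‖ ≤ 1

/-- A closed subspace `L` reduces `T` if `L` is invariant under both `T` and `T*`. -/
def Reduces (T : H →L[ℂ] H) (L : Submodule ℂ H) : Prop :=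
  ∀ x ∈ L, T x ∈ L ∧ adjoint T x ∈ L

/-- `T` restricted to `L` is of class `𝒞_{1,r}`:
`(1+r²)‖x‖² = ‖Tx‖² + r²‖T⁻*x‖²` for all `x ∈ L`. -/
def RestrictedScriptC1r (r : ℝ) (T : H →L[ℂ] H) (L : Submodule ℂ H) : Prop :=
  ∀ x ∈ L, (1 + r ^ 2) * ‖x‖ ^ 2 = ‖T x‖ ^ 2 + r ^ 2 * ‖adjoint (Ring.inverse T) x‖ ^ 2

/-- `p_{k,nm}(T) = T^{n₁}T*^{m₁}⋯T^{n_k}T*^{m_k}`. -/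
noncomputable def pknm (T : H →L[ℂ] H) {k : ℕ} (n m : Fin k → ℕ) : H →L[ℂ] H :=
  ((List.finRange k).map fun i => T ^ n i * (adjoint T) ^ m i).prod

open scoped InnerProductSpace

theorem coR (s : ℝ) : (RCLike.ofReal s : ℂ) = Complex.ofReal s := rfl

noncomputable def opA (r : ℝ) (T : H →L[ℂ] H) : H →L[ℂ] H :=
  ((1 + r ^ 2 : ℝ) : ℂ) • 1 - adjoint T * T -
    ((r ^ 2 : ℝ) : ℂ) • (Ring.inverse T * adjoint (Ring.inverse T))

set_option maxHeartbeats 1000000 in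
set_option synthInstance.maxHeartbeats 1000000 in
theorem opA_nonneg (r : ℝ) (hr0 : 0 < r) (T : H →L[ℂ] H) (hT : IsUnit T) (h1' : ‖T‖ ≤ 1)
    (h2' : ‖(r : ℂ) • Ring.inverse T‖ ≤ 1) : (0 : H →L[ℂ] H) ≤ opA r T := by
  have hrinv : r * ‖Ring.inverse T‖ ≤ 1 := by
    rw [norm_smul] at h2'
    simpa [Complex.norm_real, Real.norm_eq_abs, abs_of_pos hr0] using h2'
  set S := adjoint (Ring.inverse T) with hS
  set P := T * adjoint T with hP
  have hPsa : IsSelfAdjoint P := by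
    rw [IsSelfAdjoint]
    simp [hP, star_mul, ContinuousLinearMap.star_eq_adjoint, ContinuousLinearMap.adjoint_adjoint]
  have e1 : Ring.inverse T * T = 1 := Ring.inverse_mul_cancel _ hT
  have e2 : T * Ring.inverse T = 1 := Ring.mul_inverse_cancel _ hT
  have e3 : adjoint T * S = 1 := by
    have := congrArg star e1
    simpa [star_mul, ContinuousLinearMap.star_eq_adjoint] using this
  have e4 : S * adjoint T = 1 := by
    have := congrArg star e2
    simpa [star_mul, ContinuousLinearMap.star_eq_adjoint] using this
  have halg : algebraMap ℝ (H →L[ℂ] H) (r ^ 2) = ((r ^ 2 : ℝ) : ℂ) • 1 := by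
    rw [IsScalarTower.algebraMap_apply ℝ ℂ (H →L[ℂ] H), Algebra.algebraMap_eq_smul_one]
    norm_cast
  -- P ≤ 1
  have hTadj_le : ∀ x : H, ‖adjoint T x‖ ≤ ‖x‖ := by
    intro x
    calc ‖adjoint T x‖ ≤ ‖adjoint T‖ * ‖x‖ := (adjoint T).le_opNorm x
      _ = ‖T‖ * ‖x‖ := by
          rw [LinearIsometryEquiv.norm_map (ContinuousLinearMap.adjoint (E := H) (F := H)) T]
      _ ≤ 1 * ‖x‖ := by gcongr
      _ = ‖x‖ := one_mul _
  have hinnerP : ∀ x : H, ⟪P x, x⟫_ℂ = ((‖adjoint T x‖ ^ 2 : ℝ) : ℂ) := by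
    intro x
    rw [hP, ContinuousLinearMap.mul_apply]
    nth_rewrite 1 [← ContinuousLinearMap.adjoint_adjoint T]
    rw [ContinuousLinearMap.adjoint_inner_left, inner_self_eq_norm_sq_to_K]
    norm_cast
  have hPle : P ≤ 1 := by
    rw [ContinuousLinearMap.le_def]
    have hone : IsSelfAdjoint (1 : H →L[ℂ] H) := by rw [IsSelfAdjoint, star_one]
    refine ⟨ContinuousLinearMap.isSelfAdjoint_iff_isSymmetric.mp (hone.sub hPsa), fun x => ?_⟩
    have hz : ⟪(1 - P) x, x⟫_ℂ = ((‖x‖ ^ 2 - ‖adjoint T x‖ ^ 2 : ℝ) : ℂ) := by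
      rw [ContinuousLinearMap.sub_apply, inner_sub_left, ContinuousLinearMap.one_apply,
        hinnerP, inner_self_eq_norm_sq_to_K]
      simp only [coR]
      push_cast
      ring
    rw [ContinuousLinearMap.reApplyInnerSelf_apply, hz, RCLike.re_to_complex,
      Complex.ofReal_re]
    have := pow_le_pow_left₀ (norm_nonneg ((adjoint T) x)) (hTadj_le x) 2
    linarith
  -- r² ≤ P
  have hPge : algebraMap ℝ (H →L[ℂ] H) (r ^ 2) ≤ P := by
    rw [halg, ContinuousLinearMap.le_def]
    have hsa2 : IsSelfAdjoint (P - ((r ^ 2 : ℝ) : ℂ) • (1 : H →L[ℂ] H)) := by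
      refine hPsa.sub ?_
      rw [IsSelfAdjoint, star_smul, star_one, Complex.star_def, Complex.conj_ofReal]
    refine ⟨ContinuousLinearMap.isSelfAdjoint_iff_isSymmetric.mp hsa2, fun x => ?_⟩
    have hx : S (adjoint T x) = x := by
      rw [← ContinuousLinearMap.mul_apply, e4, ContinuousLinearMap.one_apply]
    have hrx : r * ‖x‖ ≤ ‖adjoint T x‖ := by
      conv_lhs => rw [← hx]
      calc r * ‖S (adjoint T x)‖ ≤ r * (‖S‖ * ‖adjoint T x‖) := by
            gcongr; exact S.le_opNorm _
        _ = (r * ‖Ring.inverse T‖) * ‖adjoint T x‖ := by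
            rw [hS, LinearIsometryEquiv.norm_map (ContinuousLinearMap.adjoint (E := H) (F := H))]
            ring
        _ ≤ 1 * ‖adjoint T x‖ := by gcongr
        _ = ‖adjoint T x‖ := one_mul _
    have hz : ⟪(P - ((r ^ 2 : ℝ) : ℂ) • 1) x, x⟫_ℂ =
        ((‖adjoint T x‖ ^ 2 - r ^ 2 * ‖x‖ ^ 2 : ℝ) : ℂ) := by
      rw [ContinuousLinearMap.sub_apply, inner_sub_left, ContinuousLinearMap.smul_apply,
        ContinuousLinearMap.one_apply, inner_smul_left, hinnerP, inner_self_eq_norm_sq_to_K,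
        Complex.conj_ofReal]
      simp only [coR]
      push_cast
      ring
    rw [ContinuousLinearMap.reApplyInnerSelf_apply, hz, RCLike.re_to_complex,
      Complex.ofReal_re]
    have h2 := pow_le_pow_left₀ (by positivity) hrx 2
    rw [mul_pow] at h2
    linarith
  -- spectrum bounds
  have hspec1 : ∀ t ∈ spectrum ℝ P, t ≤ 1 := by
    have h1 : P ≤ algebraMap ℝ (H →L[ℂ] H) 1 := by rw [map_one]; exact hPle
    exact (le_algebraMap_iff_spectrum_le (R := ℝ) (a := P) hPsa).mp h1
  have hspec2 : ∀ t ∈ spectrum ℝ P, r ^ 2 ≤ t :=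
    (algebraMap_le_iff_le_spectrum (R := ℝ) (a := P) hPsa).mp hPge
  -- the CFC element
  have hQ : (0 : H →L[ℂ] H) ≤ cfc (fun t : ℝ => (1 - t) * (t - r ^ 2)) P :=
    cfc_nonneg fun t ht => by nlinarith [hspec1 t ht, hspec2 t ht]
  have hQeq : cfc (fun t : ℝ => (1 - t) * (t - r ^ 2)) P
      = (1 - P) * (P - ((r ^ 2 : ℝ) : ℂ) • 1) := by
    rw [cfc_mul _ _ P (by fun_prop) (by fun_prop)]
    congr 1
    · rw [cfc_sub _ _ P (by fun_prop) (by fun_prop), cfc_const_one ℝ P, cfc_id' ℝ P]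
    · rw [cfc_sub _ _ P (by fun_prop) (by fun_prop), cfc_id' ℝ P, cfc_const _ P, halg]
  -- congruence identity
  have e1' : ∀ X : H →L[ℂ] H, Ring.inverse T * (T * X) = X := fun X => by
    rw [← mul_assoc, e1, one_mul]
  have e3' : ∀ X : H →L[ℂ] H, adjoint T * (S * X) = X := fun X => by
    rw [← mul_assoc, e3, one_mul]
  have hA : opA r T = Ring.inverse T * ((1 - P) * (P - ((r ^ 2 : ℝ) : ℂ) • 1)) *
      star (Ring.inverse T) := by
    rw [ContinuousLinearMap.star_eq_adjoint, ← hS]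
    simp only [opA, hP, mul_sub, sub_mul, one_mul, mul_one, smul_mul_assoc, mul_smul_comm,
      mul_assoc, e1', e3', e1, e2, e3, e4]
    module
  rw [hA, ← hQeq]
  exact star_right_conjugate_nonneg hQ (Ring.inverse T)

theorem opA_inner (r : ℝ) (T : H →L[ℂ] H) (x : H) :
    ⟪opA r T x, x⟫_ℂ = (((1 + r ^ 2) * ‖x‖ ^ 2 - ‖T x‖ ^ 2 -
      r ^ 2 * ‖adjoint (Ring.inverse T) x‖ ^ 2 : ℝ) : ℂ) := by
  have h1 : ⟪(adjoint T * T) x, x⟫_ℂ = ((‖T x‖ : ℂ)) ^ 2 := by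
    rw [ContinuousLinearMap.mul_apply, ContinuousLinearMap.adjoint_inner_left,
      inner_self_eq_norm_sq_to_K]
    norm_cast
  have hTB : Ring.inverse T = adjoint (adjoint (Ring.inverse T)) :=
    (ContinuousLinearMap.adjoint_adjoint _).symm
  have h2 : ⟪(Ring.inverse T * adjoint (Ring.inverse T)) x, x⟫_ℂ =
      ((‖adjoint (Ring.inverse T) x‖ : ℂ)) ^ 2 := by
    rw [ContinuousLinearMap.mul_apply]
    nth_rewrite 1 [hTB]
    rw [ContinuousLinearMap.adjoint_inner_left, inner_self_eq_norm_sq_to_K]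
    norm_cast
  simp only [opA, ContinuousLinearMap.sub_apply, ContinuousLinearMap.smul_apply,
    ContinuousLinearMap.one_apply, inner_sub_left, inner_smul_left, h1, h2,
    inner_self_eq_norm_sq_to_K, Complex.conj_ofReal, coR]
  push_cast
  ring

set_option synthInstance.maxHeartbeats 1000000 in
set_option maxHeartbeats 1000000 in
theorem pos_inner_zero (A : H →L[ℂ] H) (hA : 0 ≤ A) (x : H) (h : ⟪A x, x⟫_ℂ = 0) :
    A x = 0 := by
  have h2 : CFC.sqrt A * CFC.sqrt A = A := CFC.sqrt_mul_sqrt_self A hA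
  have hs : (0 : H →L[ℂ] H) ≤ CFC.sqrt A := CFC.sqrt_nonneg A
  have hsa : IsSelfAdjoint (CFC.sqrt A) := IsSelfAdjoint.of_nonneg hs
  have hadj : adjoint (CFC.sqrt A) = CFC.sqrt A := by
    rw [← ContinuousLinearMap.star_eq_adjoint]; exact hsa
  have key : ⟪CFC.sqrt A x, CFC.sqrt A x⟫_ℂ = 0 := by
    nth_rewrite 1 [← hadj]
    rw [ContinuousLinearMap.adjoint_inner_left, ← ContinuousLinearMap.mul_apply, h2,
      ← inner_conj_symm, h, map_zero]
  have hx : CFC.sqrt A x = 0 := inner_self_eq_zero.mp key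
  rw [← h2, ContinuousLinearMap.mul_apply, hx, map_zero]

theorem opA_apply_eq_zero_iff (r : ℝ) (hr0 : 0 < r) (T : H →L[ℂ] H) (hT : IsUnit T)
    (h1' : ‖T‖ ≤ 1) (h2' : ‖(r : ℂ) • Ring.inverse T‖ ≤ 1) (x : H) : opA r T x = 0 ↔
      (1 + r ^ 2) * ‖x‖ ^ 2 - ‖T x‖ ^ 2 - r ^ 2 * ‖adjoint (Ring.inverse T) x‖ ^ 2 = 0 := by
  constructor
  · intro h
    have := opA_inner r T x
    rw [h, inner_zero_left] at this
    exact_mod_cast this.symm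
  · intro h
    refine pos_inner_zero _ (opA_nonneg r hr0 T hT h1' h2') x ?_
    rw [opA_inner, h, Complex.ofReal_zero]

theorem pknm_zero (T : H →L[ℂ] H) (n m : Fin 0 → ℕ) : pknm T n m = 1 := by
  simp [pknm]

theorem pknm_snoc (T : H →L[ℂ] H) {k : ℕ} (n m : Fin k → ℕ) (a b : ℕ) :
    pknm T (Fin.snoc n a) (Fin.snoc m b) = pknm T n m * (T ^ a * (adjoint T) ^ b) := by
  unfold pknm
  rw [List.finRange_succ_last, List.map_append, List.prod_append, List.map_map]
  simp [Function.comp_def, Fin.snoc_castSucc, Fin.snoc_last]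

theorem prod_apply_mem {L : Submodule ℂ H} (l : List (H →L[ℂ] H))
    (h : ∀ f ∈ l, ∀ y ∈ L, f y ∈ L) : ∀ x ∈ L, l.prod x ∈ L := by
  induction l with
  | nil => simp
  | cons f l ih =>
    intro x hx
    rw [List.prod_cons, ContinuousLinearMap.mul_apply]
    exact h f (by simp) _ (ih (fun g hg => h g (by simp [hg])) x hx)

theorem pknm_apply_mem {T : H →L[ℂ] H} {L : Submodule ℂ H} (hL : Reduces T L) {k : ℕ}
    (n m : Fin k → ℕ) {x : H} (hx : x ∈ L) : pknm T n m x ∈ L := by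
  have hpowT : ∀ (a : ℕ) (y : H), y ∈ L → (T ^ a) y ∈ L := by
    intro a
    induction a with
    | zero => simp
    | succ a ih =>
      intro y hy
      rw [pow_succ, ContinuousLinearMap.mul_apply]
      exact ih _ (hL y hy).1
  have hpowS : ∀ (b : ℕ) (y : H), y ∈ L → ((adjoint T) ^ b) y ∈ L := by
    intro b
    induction b with
    | zero => simp
    | succ b ih =>
      intro y hy
      rw [pow_succ, ContinuousLinearMap.mul_apply]
      exact ih _ (hL y hy).2
  refine prod_apply_mem _ ?_ x hx
  intro f hf y hy
  rw [List.mem_map] at hf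
  obtain ⟨i, -, rfl⟩ := hf
  rw [ContinuousLinearMap.mul_apply]
  exact hpowT _ _ (hpowS _ _ hy)

theorem stmt13 (r : ℝ) (hr0 : 0 < r) (hr1 : r < 1) (T : H →L[ℂ] H) (hT : IsUnit T)
    (hmem : MemC1r r T) :
    ∃ H₁ : Submodule ℂ H, IsClosed (H₁ : Set H) ∧ Reduces T H₁ ∧
      RestrictedScriptC1r r T H₁ ∧
      (∀ L : Submodule ℂ H, IsClosed (L : Set H) → Reduces T L →
        RestrictedScriptC1r r T L → L ≤ H₁) ∧
      (H₁ : Set H) = {x : H | ∀ (k : ℕ) (n m : Fin k → ℕ),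
        (1 + r ^ 2) * ‖pknm T n m x‖ ^ 2 - ‖T (pknm T n m x)‖ ^ 2 -
          r ^ 2 * ‖adjoint (Ring.inverse T) (pknm T n m x)‖ ^ 2 = 0} := by
  obtain ⟨-, hT1, hT2⟩ := hmem
  have hzero := opA_apply_eq_zero_iff r hr0 T hT hT1 hT2
  set A := opA r T with hA
  refine ⟨⨅ t : (Σ k : ℕ, (Fin k → ℕ) × (Fin k → ℕ)),
    (A ∘L pknm T t.2.1 t.2.2).ker, ?_, ?_, ?_, ?_, ?_⟩
  case _ =>
    rw [Submodule.coe_iInf]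
    exact isClosed_iInter fun t => ContinuousLinearMap.isClosed_ker _
  all_goals
    have hmemH : ∀ x : H, (x ∈ ⨅ t : (Σ k : ℕ, (Fin k → ℕ) × (Fin k → ℕ)),
        (A ∘L pknm T t.2.1 t.2.2).ker) ↔
        ∀ (k : ℕ) (n m : Fin k → ℕ), A (pknm T n m x) = 0 := by
      intro x
      rw [Submodule.mem_iInf]
      constructor
      · intro h k n m
        simpa using h ⟨k, (n, m)⟩
      · rintro h ⟨k, n, m⟩
        simpa using h k n m
  case _ =>
    intro x hx
    rw [hmemH] at hx
    constructor
    · rw [hmemH]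
      intro k n m
      have := hx (k + 1) (Fin.snoc n 1) (Fin.snoc m 0)
      rwa [pknm_snoc, pow_one, pow_zero, mul_one, ContinuousLinearMap.mul_apply] at this
    · rw [hmemH]
      intro k n m
      have := hx (k + 1) (Fin.snoc n 0) (Fin.snoc m 1)
      rwa [pknm_snoc, pow_zero, pow_one, one_mul, ContinuousLinearMap.mul_apply] at this
  case _ =>
    intro x hx
    rw [hmemH] at hx
    have h0 := hx 0 (fun i => i.elim0) (fun i => i.elim0)
    rw [pknm_zero, ContinuousLinearMap.one_apply] at h0
    have := (hzero x).mp h0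
    linarith
  case _ =>
    intro L hLclosed hLred hLres x hx
    rw [hmemH]
    intro k n m
    have hpx : pknm T n m x ∈ L := pknm_apply_mem hLred n m hx
    have := hLres _ hpx
    rw [hzero]
    linarith
  case _ =>
    ext x
    rw [SetLike.mem_coe, hmemH]
    simp only [Set.mem_setOf_eq]
    constructor
    · intro h k n m
      exact (hzero _).mp (h k n m)
    · intro h k n m
      exact (hzero _).mpr (h k n m)
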